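/- Assume d≥2. The series Σ_{[C]_Γ} (1/|Γ_C|)·Log(1−u^{|C|}), summed over all Γ-equivalence classes of prime cycles (Log the principal branch of the logarithm), converges absolutely and uniformly on compact subsets of the open disc {u∈ℂ : |u|<1/(d−1)}; consequently the Ihara zeta function Z_{X,Γ}(u) defined by the Euler product Π_{[C]_Γ}(1−u^{|C|})^{−1/|Γ_C|} = exp(−Σ_{[C]_Γ}(1/|Γ_C|)Log(1−u^{|C|})) is a holomorphic, nowhere-vanishing function on this disc. -/

import Mathlib

noncomputable section

/-- `c : ℕ → E` is (the edge sequence of) a closed path of length `m`: it is `m`-periodic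
and consecutive edges match up. -/
def IsClosedPath {V E : Type*} (o t : E → V) (m : ℕ) (c : ℕ → E) : Prop :=
  (∀ i, t (c i) = o (c (i + 1))) ∧ (∀ i, c (i + m) = c i)

/-- Reduced (proper and tail-less) closed path: cyclically, no edge is followed by its
reverse. -/
def IsReducedPath {E : Type*} (bar : E → E) (c : ℕ → E) : Prop :=
  ∀ i, c (i + 1) ≠ bar (c i)

/-- The effective length of a closed path: the length of the underlying prime cycle,
i.e. the least positive period. -/
def effLen {E : Type*} (c : ℕ → E) : ℕ :=
  sInf {p : ℕ | 0 < p ∧ ∀ i, c (i + p) = c i}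

/-- The stabilizer in `Γ` of the cycle determined by the closed path `c`: those `γ`
mapping `c` to a cyclic shift of itself. -/
def cycStab (Γ : Type*) {E : Type*} [Group Γ] [MulAction Γ E] (c : ℕ → E) : Set Γ :=
  {γ : Γ | ∃ k : ℕ, ∀ i, γ • c i = c (i + k)}

/-- The set of `Γ`-equivalence classes of prime (primitive reduced) cycles:
primitive reduced closed paths (of positive length equal to their effective length),
up to cyclic shift and up to the action of `Γ`. -/
def PrimeCycleQuot {V E : Type*} (Γ : Type*) [Group Γ] [MulAction Γ E]
    (o t : E → V) (bar : E → E) : Type _ :=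
  Quot (fun p p' : {p : ℕ × (ℕ → E) // 0 < p.1 ∧ IsClosedPath o t p.1 p.2 ∧
      IsReducedPath bar p.2 ∧ effLen p.2 = p.1} =>
    (p : ℕ × (ℕ → E)).1 = (p' : ℕ × (ℕ → E)).1 ∧
      ∃ (γ : Γ) (k : ℕ), ∀ i, (p' : ℕ × (ℕ → E)).2 i = γ • (p : ℕ × (ℕ → E)).2 (i + k))

/-- The length `|C|` of a `Γ`-class of prime cycles. -/
def primeLen {V E : Type*} (Γ : Type*) [Group Γ] [MulAction Γ E]
    (o t : E → V) (bar : E → E) (ξ : PrimeCycleQuot Γ o t bar) : ℕ :=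
  ((Quot.out ξ : {p : ℕ × (ℕ → E) // 0 < p.1 ∧ IsClosedPath o t p.1 p.2 ∧
      IsReducedPath bar p.2 ∧ effLen p.2 = p.1}) : ℕ × (ℕ → E)).1

/-- The cardinality `|Γ_C|` of the stabilizer of a `Γ`-class of prime cycles. -/
def primeStab {V E : Type*} (Γ : Type*) [Group Γ] [MulAction Γ E]
    (o t : E → V) (bar : E → E) (ξ : PrimeCycleQuot Γ o t bar) : ℕ :=
  Nat.card (cycStab Γ (((Quot.out ξ : {p : ℕ × (ℕ → E) // 0 < p.1 ∧
      IsClosedPath o t p.1 p.2 ∧ IsReducedPath bar p.2 ∧ effLen p.2 = p.1}) :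
    ℕ × (ℕ → E)).2))

/-- The Ihara zeta function of the periodic graph `(X,Γ)`, defined by the Euler product
`Z(u) = Π_{[C]_Γ prime} (1−u^{|C|})^{−1/|Γ_C|}
      = exp(−Σ_{[C]_Γ} (1/|Γ_C|) Log(1−u^{|C|}))`. -/
def ZetaIhara {V E : Type*} (Γ : Type*) [Group Γ] [MulAction Γ E]
    (o t : E → V) (bar : E → E) (u : ℂ) : ℂ :=
  Complex.exp (-∑' ξ : PrimeCycleQuot Γ o t bar,
    (1 / (primeStab Γ o t bar ξ) : ℂ) * Complex.log (1 - u ^ (primeLen Γ o t bar ξ)))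

namespace IharaAux

variable {V E : Type*}

/-- Finset of admissible next edges after `e`. -/
def nextF (o t : E → V) (bar : E → E) (hfib : ∀ v, {e | o e = v}.Finite) (e : E) :
    Finset E :=
  letI := Classical.decEq E
  ((hfib (t e)).toFinset).erase (bar e)

lemma mem_nextF {o t : E → V} {bar : E → E} {hfib : ∀ v, {e | o e = v}.Finite}
    {e e' : E} (h1 : o e' = t e) (h2 : e' ≠ bar e) :
    e' ∈ nextF o t bar hfib e := by
  simp [nextF, Set.Finite.mem_toFinset, h1, h2]

lemma card_nextF (o t : E → V) (bar : E → E) (hfib : ∀ v, {e | o e = v}.Finite)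
    (ho_bar : ∀ e, o (bar e) = t e)
    (d : ℕ) (hdeg : ∀ v, Nat.card {e // o e = v} ≤ d) (e : E) :
    (nextF o t bar hfib e).card ≤ d - 1 := by
  classical
  have hmem : bar e ∈ (hfib (t e)).toFinset := by
    simp [Set.Finite.mem_toFinset, ho_bar]
  have hle : (nextF o t bar hfib e).card ≤ (hfib (t e)).toFinset.card - 1 := by
    rw [nextF]
    exact le_of_eq (Finset.card_erase_of_mem hmem)
  have hcard : (hfib (t e)).toFinset.card = Nat.card {e' // o e' = t e} := by
    have h1 : Nat.card ↥{e' | o e' = t e} = ({e' | o e' = t e} : Set E).ncard :=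
      Nat.card_coe_set_eq _
    have h2 : ({e' | o e' = t e} : Set E).ncard = (hfib (t e)).toFinset.card :=
      Set.ncard_eq_toFinset_card _ (hfib (t e))
    exact (h2 ▸ h1).symm
  have hd := hdeg (t e)
  omega

/-- Next edges for a (reversed) nonempty list. -/
def headNextF (o t : E → V) (bar : E → E) (hfib : ∀ v, {e | o e = v}.Finite) :
    List E → Finset E
  | [] => ∅
  | (a :: _) => nextF o t bar hfib a

/-- Finset of reversed reduced path lists of length `m+1` starting at `e`. -/
def pathF (o t : E → V) (bar : E → E) (hfib : ∀ v, {e | o e = v}.Finite) (e : E) :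
    ℕ → Finset (List E)
  | 0 => {[e]}
  | m + 1 =>
      letI := Classical.decEq (List E)
      (pathF o t bar hfib e m).biUnion
        (fun l => (headNextF o t bar hfib l).image (· :: l))

lemma card_pathF (o t : E → V) (bar : E → E) (hfib : ∀ v, {e | o e = v}.Finite)
    (ho_bar : ∀ e, o (bar e) = t e)
    (d : ℕ) (hdeg : ∀ v, Nat.card {e // o e = v} ≤ d) (e : E) (m : ℕ) :
    (pathF o t bar hfib e m).card ≤ (d - 1) ^ m := by
  letI := Classical.decEq (List E)
  induction m with
  | zero => simp [pathF]
  | succ m ih =>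
      rw [pathF]
      refine le_trans (Finset.card_biUnion_le) ?_
      have : ∀ l ∈ pathF o t bar hfib e m,
          ((headNextF o t bar hfib l).image (· :: l)).card ≤ d - 1 := by
        intro l _
        refine le_trans (Finset.card_image_le) ?_
        cases l with
        | nil => simp [headNextF]
        | cons a l' => exact card_nextF o t bar hfib ho_bar d hdeg a
      refine le_trans (Finset.sum_le_card_nsmul _ _ (d-1) this) ?_
      rw [smul_eq_mul, pow_succ]
      exact Nat.mul_le_mul_right _ ih

/-- The reversed list `[c m, …, c 0]`. -/
def revList (c : ℕ → E) : ℕ → List E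
  | 0 => [c 0]
  | m + 1 => c (m + 1) :: revList c m

lemma revList_head (c : ℕ → E) (m : ℕ) : ∃ l', revList c m = c m :: l' := by
  cases m with
  | zero => exact ⟨[], rfl⟩
  | succ m => exact ⟨revList c m, rfl⟩

lemma mem_pathF (o t : E → V) (bar : E → E) (hfib : ∀ v, {e | o e = v}.Finite)
    {c : ℕ → E} (hcl : ∀ i, t (c i) = o (c (i + 1)))
    (hred : ∀ i, c (i + 1) ≠ bar (c i)) (m : ℕ) :
    revList c m ∈ pathF o t bar hfib (c 0) m := by
  letI := Classical.decEq (List E)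
  induction m with
  | zero => simp [revList, pathF]
  | succ m ih =>
      rw [pathF]
      refine Finset.mem_biUnion.2 ⟨revList c m, ih, ?_⟩
      refine Finset.mem_image.2 ⟨c (m + 1), ?_, rfl⟩
      obtain ⟨l', hl'⟩ := revList_head c m
      rw [hl', headNextF]
      exact mem_nextF (hcl m).symm (hred m)

lemma revList_inj {c c' : ℕ → E} {m : ℕ} (h : revList c m = revList c' m) :
    ∀ i ≤ m, c i = c' i := by
  induction m with
  | zero =>
      intro i hi
      interval_cases i
      simpa [revList] using h
  | succ m ih =>
      intro i hi
      rw [revList, revList] at h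
      rcases List.cons.injEq .. ▸ h with ⟨h1, h2⟩
      rcases Nat.lt_or_ge i (m + 1) with hlt | hge
      · exact ih h2 i (by omega)
      · have : i = m + 1 := by omega
        rw [this]; exact h1

lemma periodic_ext {c c' : ℕ → E} {m : ℕ} (hm : 0 < m)
    (hc : ∀ i, c (i + m) = c i) (hc' : ∀ i, c' (i + m) = c' i)
    (h : ∀ i < m, c i = c' i) : c = c' := by
  have key : ∀ (f : ℕ → E), (∀ i, f (i + m) = f i) → ∀ q i, f (i + q * m) = f i := by
    intro f hf q
    induction q with
    | zero => simp
    | succ q ih =>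
        intro i
        have : i + (q + 1) * m = (i + q * m) + m := by ring
        rw [this, hf, ih]
  funext j
  have hj : j = j % m + (j / m) * m := by
    rw [Nat.mod_add_div' j m]
  calc c j = c (j % m + (j / m) * m) := by rw [← hj]
    _ = c (j % m) := key c hc _ _
    _ = c' (j % m) := h _ (Nat.mod_lt _ hm)
    _ = c' (j % m + (j / m) * m) := (key c' hc' _ _).symm
    _ = c' j := by rw [← hj]


/-- The defining condition of a primitive reduced closed path. -/
abbrev Cond {V E : Type*} (o t : E → V) (bar : E → E) (p : ℕ × (ℕ → E)) : Prop :=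
  0 < p.1 ∧ IsClosedPath o t p.1 p.2 ∧ IsReducedPath bar p.2 ∧ effLen p.2 = p.1

/-- Primitive reduced closed paths with initial edge in `F1`. -/
abbrev TT {V E : Type*} (o t : E → V) (bar : E → E) (F1 : Set E) : Type _ :=
  {q : {p : ℕ × (ℕ → E) // Cond o t bar p} // (q : ℕ × (ℕ → E)).2 0 ∈ F1}

section Action

variable {V E Γ : Type*} [Group Γ] [MulAction Γ V] [MulAction Γ E]

lemma effLen_smul (γ : Γ) (c : ℕ → E) : effLen (fun i => γ • c i) = effLen c := by
  unfold effLen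
  congr 1
  ext p
  simp only [Set.mem_setOf_eq]
  constructor
  · rintro ⟨h1, h2⟩
    exact ⟨h1, fun i => MulAction.injective γ (h2 i)⟩
  · rintro ⟨h1, h2⟩
    exact ⟨h1, fun i => by simp only [h2 i]⟩

lemma cond_smul (o t : E → V) (bar : E → E)
    (ho_smul : ∀ (γ : Γ) (e : E), o (γ • e) = γ • o e)
    (ht_smul : ∀ (γ : Γ) (e : E), t (γ • e) = γ • t e)
    (hbar_smul : ∀ (γ : Γ) (e : E), bar (γ • e) = γ • bar e)
    (γ : Γ) {p : ℕ × (ℕ → E)} (hp : Cond o t bar p) :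
    Cond o t bar (p.1, fun i => γ • p.2 i) := by
  obtain ⟨hm, ⟨hcl1, hcl2⟩, hred, heff⟩ := hp
  refine ⟨hm, ⟨?_, ?_⟩, ?_, ?_⟩
  · intro i
    simp only [ht_smul, ho_smul, hcl1 i]
  · intro i
    simp only [hcl2 i]
  · intro i h
    exact hred i (MulAction.injective γ (by simpa [hbar_smul] using h))
  · simpa [effLen_smul] using heff

lemma stab_edge_finite (o : E → V)
    (ho_smul : ∀ (γ : Γ) (e : E), o (γ • e) = γ • o e)
    (hstab : ∀ v : V, Finite (MulAction.stabilizer Γ v)) (e : E) :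
    Finite (MulAction.stabilizer Γ e) := by
  haveI := hstab (o e)
  refine Finite.of_injective
    (fun γ : MulAction.stabilizer Γ e =>
      (⟨γ.1, ?_⟩ : MulAction.stabilizer Γ (o e))) ?_
  · rw [MulAction.mem_stabilizer_iff, ← ho_smul, γ.2]
  · intro a b h
    have h2 := congrArg Subtype.val h
    exact Subtype.ext h2

/-- Claim A: summability of the pathwise weights. -/
lemma summable_W (o t : E → V) (bar : E → E)
    (hfib : ∀ v, {e | o e = v}.Finite)
    (ho_bar : ∀ e, o (bar e) = t e)
    (d : ℕ) (hdeg : ∀ v, Nat.card {e // o e = v} ≤ d)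
    (F1 : Set E)
    (hcovol : Summable fun e : F1 => (1 : ℝ) / Nat.card (MulAction.stabilizer Γ (e : E)))
    (r : ℝ) (hr0 : 0 ≤ r) (hrd : r * ((d - 1 : ℕ) : ℝ) < 1) :
    Summable (fun p : TT o t bar F1 =>
      (1 / Nat.card (MulAction.stabilizer Γ (p.1.1.2 0)) : ℝ) * r ^ p.1.1.1) := by
  classical
  set x : ℝ := r * ((d - 1 : ℕ) : ℝ) with hx
  have hx0 : 0 ≤ x := mul_nonneg hr0 (Nat.cast_nonneg _)
  have hgeom : Summable fun m : ℕ => x ^ m := summable_geometric_of_lt_one hx0 hrd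
  set A : E → ℝ := fun e => (1 / Nat.card (MulAction.stabilizer Γ e) : ℝ) with hA
  have hA0 : ∀ e, 0 ≤ A e := fun e => by positivity
  set g : (Σ _ : F1, Σ _ : ℕ, List E) → ℝ := fun z =>
    if z.2.2 ∈ pathF o t bar hfib (z.1 : E) z.2.1 then A (z.1 : E) * r ^ (z.2.1 + 1)
    else 0 with hgdef
  have hg0 : ∀ z, 0 ≤ g z := by
    intro z
    simp only [hgdef]
    split
    · exact mul_nonneg (hA0 _) (pow_nonneg hr0 _)
    · exact le_refl 0
  -- innermost summability: over lists, fixed (e, m)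
  have hinner : ∀ (e : F1) (m : ℕ), Summable fun l : List E => g ⟨e, m, l⟩ := by
    intro e m
    refine summable_of_ne_finset_zero (s := pathF o t bar hfib (e : E) m) ?_
    intro l hl
    simp only [hgdef, if_neg hl]
  -- value of the innermost sum
  have hval : ∀ (e : F1) (m : ℕ),
      (∑' l : List E, g ⟨e, m, l⟩) ≤ A (e : E) * r * x ^ m := by
    intro e m
    rw [tsum_eq_sum (s := pathF o t bar hfib (e : E) m)
      (fun l hl => by simp only [hgdef, if_neg hl])]
    have hterm : ∀ l ∈ pathF o t bar hfib (e : E) m,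
        g ⟨e, m, l⟩ ≤ A (e : E) * r ^ (m + 1) := by
      intro l hl
      simp only [hgdef, if_pos hl, le_refl]
    refine le_trans (Finset.sum_le_card_nsmul _ _ _ hterm) ?_
    rw [nsmul_eq_mul]
    have hcard : ((pathF o t bar hfib (e : E) m).card : ℝ) ≤ ((d - 1 : ℕ) : ℝ) ^ m := by
      rw [← Nat.cast_pow]
      exact_mod_cast card_pathF o t bar hfib ho_bar d hdeg (e : E) m
    calc ((pathF o t bar hfib (e : E) m).card : ℝ) * (A (e : E) * r ^ (m + 1))
        ≤ ((d - 1 : ℕ) : ℝ) ^ m * (A (e : E) * r ^ (m + 1)) := by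
          exact mul_le_mul_of_nonneg_right hcard
            (mul_nonneg (hA0 _) (pow_nonneg hr0 _))
      _ = A (e : E) * r * x ^ m := by
          rw [hx, mul_pow, pow_succ]
          ring
  -- middle summability: over m, fixed e
  have hmid : ∀ (e : F1), Summable fun m : ℕ => ∑' l : List E, g ⟨e, m, l⟩ := by
    intro e
    refine Summable.of_nonneg_of_le (fun m => tsum_nonneg fun l => hg0 _)
      (hval e) ?_
    exact hgeom.mul_left _
  have hfib2 : ∀ (e : F1), Summable fun y : Σ _ : ℕ, List E => g ⟨e, y⟩ := by
    intro e
    exact (summable_sigma_of_nonneg (fun y => hg0 _)).mpr ⟨hinner e, hmid e⟩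
  -- outer summability: over e
  have houter : Summable fun e : F1 => ∑' y : Σ _ : ℕ, List E, g ⟨e, y⟩ := by
    have hbound : ∀ e : F1,
        (∑' y : Σ _ : ℕ, List E, g ⟨e, y⟩) ≤ A (e : E) * (r * (1 - x)⁻¹) := by
      intro e
      rw [Summable.tsum_sigma' (f := fun y : (Σ _ : ℕ, List E) => g ⟨e, y⟩) (hinner e) (hfib2 e)]
      calc (∑' m : ℕ, ∑' l : List E, g ⟨e, m, l⟩)
          ≤ ∑' m : ℕ, A (e : E) * r * x ^ m := by
            exact Summable.tsum_le_tsum (hval e) (hmid e) (hgeom.mul_left _)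
        _ = A (e : E) * r * (1 - x)⁻¹ := by
            rw [tsum_mul_left, tsum_geometric_of_lt_one hx0 hrd]
        _ = A (e : E) * (r * (1 - x)⁻¹) := by ring
    refine Summable.of_nonneg_of_le (fun e => tsum_nonneg fun y => hg0 _) hbound ?_
    simpa [hA, mul_assoc] using hcovol.mul_right (r * (1 - x)⁻¹)
  have hg : Summable g :=
    (summable_sigma_of_nonneg hg0).mpr ⟨hfib2, houter⟩
  -- the injection
  set ι : TT o t bar F1 → (Σ _ : F1, Σ _ : ℕ, List E) := fun p =>
    ⟨⟨p.1.1.2 0, p.2⟩, p.1.1.1 - 1, revList p.1.1.2 (p.1.1.1 - 1)⟩ with hι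
  have hιinj : Function.Injective ι := by
    intro p q h
    have h2 : p.1.1.1 - 1 = q.1.1.1 - 1 := congrArg (fun z => z.2.1) h
    have h3 : revList p.1.1.2 (p.1.1.1 - 1) = revList q.1.1.2 (q.1.1.1 - 1) :=
      congrArg (fun z => z.2.2) h
    have hmp : 0 < p.1.1.1 := p.1.2.1
    have hmq : 0 < q.1.1.1 := q.1.2.1
    have hmeq : p.1.1.1 = q.1.1.1 := by omega
    rw [← hmeq] at h3
    have hagree := revList_inj h3
    have hceq : p.1.1.2 = q.1.1.2 := by
      refine periodic_ext hmp p.1.2.2.1.2 (hmeq ▸ q.1.2.2.1.2) ?_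
      intro i hi
      exact hagree i (by omega)
    refine Subtype.ext (Subtype.ext (Prod.ext hmeq hceq))
  have hWg : ∀ p : TT o t bar F1,
      (1 / Nat.card (MulAction.stabilizer Γ (p.1.1.2 0)) : ℝ) * r ^ p.1.1.1
        = g (ι p) := by
    intro p
    have hmp : 0 < p.1.1.1 := p.1.2.1
    have hmem : revList p.1.1.2 (p.1.1.1 - 1) ∈
        pathF o t bar hfib (p.1.1.2 0) (p.1.1.1 - 1) :=
      mem_pathF o t bar hfib p.1.2.2.1.1 p.1.2.2.2.1 _
    simp only [hgdef, hι, if_pos hmem, hA]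
    rw [Nat.sub_add_cancel hmp]
  exact (hg.comp_injective hιinj).congr (fun p => (hWg p).symm)


end Action

end IharaAux

namespace IharaAux

section Master

variable {V E Γ : Type*} [Group Γ] [MulAction Γ V] [MulAction Γ E]

set_option maxHeartbeats 1000000 in
theorem master (o t : E → V) (bar : E → E)
    (hfib : ∀ v, {e | o e = v}.Finite)
    (ho_bar : ∀ e, o (bar e) = t e)
    (d : ℕ) (hdeg : ∀ v, Nat.card {e // o e = v} ≤ d)
    (ho_smul : ∀ (γ : Γ) (e : E), o (γ • e) = γ • o e)
    (ht_smul : ∀ (γ : Γ) (e : E), t (γ • e) = γ • t e)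
    (hbar_smul : ∀ (γ : Γ) (e : E), bar (γ • e) = γ • bar e)
    (hstab : ∀ v : V, Finite (MulAction.stabilizer Γ v))
    (F1 : Set E) (hF1 : ∀ e : E, ∃! f, f ∈ F1 ∧ ∃ γ : Γ, γ • e = f)
    (hcovol : Summable fun e : F1 => (1 : ℝ) / Nat.card (MulAction.stabilizer Γ (e : E)))
    (r : ℝ) (hr0 : 0 ≤ r) (hrd : r * ((d - 1 : ℕ) : ℝ) < 1) :
    Summable (fun ξ : PrimeCycleQuot Γ o t bar =>
      (1 / (primeStab Γ o t bar ξ) : ℝ) * r ^ primeLen Γ o t bar ξ) := by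
  classical
  set W : TT o t bar F1 → ℝ := fun p =>
    (1 / Nat.card (MulAction.stabilizer Γ (p.1.1.2 0)) : ℝ) * r ^ p.1.1.1 with hWdef
  have hW : Summable W := summable_W o t bar hfib ho_bar d hdeg F1 hcovol r hr0 hrd
  have hW0 : ∀ p, 0 ≤ W p := by
    intro p
    rw [hWdef]
    positivity
  set π : TT o t bar F1 → PrimeCycleQuot Γ o t bar := fun p => Quot.mk _ p.1 with hπdef
  have hWfib : ∀ ξ, Summable (fun p : {p : TT o t bar F1 // π p = ξ} => W p.1) :=
    fun ξ => hW.comp_injective Subtype.coe_injective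
  have hsig : Summable (fun z : Σ ξ : PrimeCycleQuot Γ o t bar,
      {p : TT o t bar F1 // π p = ξ} => W z.2.1) :=
    (Equiv.sigmaFiberEquiv π).summable_iff.mpr hW
  have hG : Summable (fun ξ : PrimeCycleQuot Γ o t bar =>
      ∑' p : {p : TT o t bar F1 // π p = ξ}, W p.1) := hsig.sigma
  refine Summable.of_nonneg_of_le (fun ξ => by positivity) ?_ hG
  intro ξ
  have hlen : primeLen Γ o t bar ξ = (Quot.out ξ).1.1 := rfl
  have hstabeq : primeStab Γ o t bar ξ = Nat.card (cycStab Γ (Quot.out ξ).1.2) := rfl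
  rcases Nat.eq_zero_or_pos (primeStab Γ o t bar ξ) with h0 | hpos
  · rw [h0]
    simp only [Nat.cast_zero, div_zero, zero_mul]
    exact tsum_nonneg (fun p => hW0 p.1)
  · -- choose a translate with initial edge in F1
    obtain ⟨f, ⟨hfF1, γ₀, hγ₀⟩, -⟩ := hF1 ((Quot.out ξ).1.2 0)
    have hcond : Cond o t bar ((Quot.out ξ).1.1, fun i => γ₀ • (Quot.out ξ).1.2 i) :=
      cond_smul o t bar ho_smul ht_smul hbar_smul γ₀ (Quot.out ξ).2
    have hc'0 : γ₀ • (Quot.out ξ).1.2 0 ∈ F1 := by rw [hγ₀]; exact hfF1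
    haveI hfinH : Finite (MulAction.stabilizer Γ (γ₀ • (Quot.out ξ).1.2 0)) :=
      stab_edge_finite o ho_smul hstab _
    haveI : Fintype (MulAction.stabilizer Γ (γ₀ • (Quot.out ξ).1.2 0)) :=
      Fintype.ofFinite _
    have heltcond : ∀ γ : MulAction.stabilizer Γ (γ₀ • (Quot.out ξ).1.2 0),
        Cond o t bar ((Quot.out ξ).1.1, fun i => (γ : Γ) • (γ₀ • (Quot.out ξ).1.2 i)) :=
      fun γ => cond_smul o t bar ho_smul ht_smul hbar_smul (γ : Γ) hcond
    have heltF1 : ∀ γ : MulAction.stabilizer Γ (γ₀ • (Quot.out ξ).1.2 0),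
        (γ : Γ) • (γ₀ • (Quot.out ξ).1.2 0) ∈ F1 := by
      intro γ
      rw [MulAction.mem_stabilizer_iff.mp γ.2]
      exact hc'0
    set elt : MulAction.stabilizer Γ (γ₀ • (Quot.out ξ).1.2 0) → TT o t bar F1 :=
      fun γ => ⟨⟨((Quot.out ξ).1.1, fun i => (γ : Γ) • (γ₀ • (Quot.out ξ).1.2 i)),
        heltcond γ⟩, heltF1 γ⟩ with heltdef
    have heltπ : ∀ γ, π (elt γ) = ξ := by
      intro γ
      refine Eq.trans (Quot.sound ?_).symm (Quot.out_eq ξ)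
      refine ⟨rfl, (γ : Γ) * γ₀, 0, fun i => ?_⟩
      show (γ : Γ) • (γ₀ • (Quot.out ξ).1.2 i)
        = ((γ : Γ) * γ₀) • (Quot.out ξ).1.2 (i + 0)
      rw [add_zero, mul_smul]
    set s : Finset {p : TT o t bar F1 // π p = ξ} :=
      Finset.image (fun γ => ⟨elt γ, heltπ γ⟩) Finset.univ with hsdef
    have hsum_le : ∑ p ∈ s, W p.1 ≤ ∑' p : {p : TT o t bar F1 // π p = ξ}, W p.1 :=
      Summable.sum_le_tsum s (fun p _ => hW0 p.1) (hWfib ξ)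
    have hconst : ∀ p ∈ s, W p.1 =
        (1 / Nat.card (MulAction.stabilizer Γ (γ₀ • (Quot.out ξ).1.2 0)) : ℝ)
          * r ^ (Quot.out ξ).1.1 := by
      intro p hp
      obtain ⟨γ, -, hγ⟩ := Finset.mem_image.mp hp
      rw [← hγ]
      show (1 / Nat.card (MulAction.stabilizer Γ ((γ : Γ) • (γ₀ • (Quot.out ξ).1.2 0))) : ℝ)
          * r ^ (Quot.out ξ).1.1 = _
      rw [MulAction.mem_stabilizer_iff.mp γ.2]
    have hsum_eq : ∑ p ∈ s, W p.1 = (s.card : ℝ) *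
        ((1 / Nat.card (MulAction.stabilizer Γ (γ₀ • (Quot.out ξ).1.2 0)) : ℝ)
          * r ^ (Quot.out ξ).1.1) := by
      rw [Finset.sum_congr rfl hconst, Finset.sum_const, nsmul_eq_mul]
    haveI hfinCS : Finite (cycStab Γ (Quot.out ξ).1.2) :=
      Nat.finite_of_card_ne_zero (Nat.pos_iff_ne_zero.mp hpos)
    have hCScard : (Set.toFinite (cycStab Γ (Quot.out ξ).1.2)).toFinset.card
        = primeStab Γ o t bar ξ := by
      rw [← Set.ncard_eq_toFinset_card _ (Set.toFinite _), ← Nat.card_coe_set_eq]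
      rfl
    have hfilter : ∀ p ∈ s,
        (Finset.univ.filter (fun γ => (⟨elt γ, heltπ γ⟩ :
          {p : TT o t bar F1 // π p = ξ}) = p)).card ≤ primeStab Γ o t bar ξ := by
      intro p hp
      rcases Finset.eq_empty_or_nonempty
        (Finset.univ.filter (fun γ => (⟨elt γ, heltπ γ⟩ :
          {p : TT o t bar F1 // π p = ξ}) = p)) with he | ⟨γ₁, hγ₁⟩
      · rw [he]
        simp
      · have hγ₁eq : (⟨elt γ₁, heltπ γ₁⟩ : {p : TT o t bar F1 // π p = ξ}) = p :=
          (Finset.mem_filter.mp hγ₁).2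
        rw [← hCScard]
        refine Finset.card_le_card_of_injOn
          (fun γ => γ₀⁻¹ * ((γ₁ : Γ)⁻¹ * (γ : Γ)) * γ₀) ?_ ?_
        · intro γ hγ
          have hγeq : (⟨elt γ, heltπ γ⟩ : {p : TT o t bar F1 // π p = ξ}) = p :=
            (Finset.mem_filter.mp hγ).2
          have helteq : elt γ = elt γ₁ := by
            have := hγeq.trans hγ₁eq.symm
            exact congrArg Subtype.val this
          have hpatheq : ∀ i, (γ : Γ) • (γ₀ • (Quot.out ξ).1.2 i)
              = (γ₁ : Γ) • (γ₀ • (Quot.out ξ).1.2 i) := by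
            intro i
            have h2 := congrArg (fun z : TT o t bar F1 => z.1.1.2) helteq
            exact congrFun h2 i
          refine (Set.Finite.mem_toFinset _).2 ?_
          refine ⟨0, fun i => ?_⟩
          rw [add_zero]
          rw [mul_smul, mul_smul, mul_smul, hpatheq i, inv_smul_smul, inv_smul_smul]
        · intro a _ b _ h
          have h1 := mul_right_cancel h
          have h2 := mul_left_cancel h1
          have h3 := mul_left_cancel h2
          exact Subtype.ext h3
    have hcardH : (Fintype.card (MulAction.stabilizer Γ (γ₀ • (Quot.out ξ).1.2 0)) : ℕ)
        ≤ s.card * primeStab Γ o t bar ξ := by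
      rw [← Finset.card_univ,
        Finset.card_eq_sum_card_image (fun γ => (⟨elt γ, heltπ γ⟩ :
          {p : TT o t bar F1 // π p = ξ})) Finset.univ]
      refine le_trans (Finset.sum_le_card_nsmul _ _ _ hfilter) ?_
      rw [smul_eq_mul]
    haveI : Nonempty (MulAction.stabilizer Γ (γ₀ • (Quot.out ξ).1.2 0)) := ⟨1⟩
    have hHpos : 0 < Fintype.card (MulAction.stabilizer Γ (γ₀ • (Quot.out ξ).1.2 0)) :=
      Fintype.card_pos
    have hHcard : Nat.card (MulAction.stabilizer Γ (γ₀ • (Quot.out ξ).1.2 0))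
        = Fintype.card (MulAction.stabilizer Γ (γ₀ • (Quot.out ξ).1.2 0)) :=
      Nat.card_eq_fintype_card
    have key : (1 : ℝ) / (primeStab Γ o t bar ξ : ℝ)
        ≤ (s.card : ℝ) / (Nat.card (MulAction.stabilizer Γ (γ₀ • (Quot.out ξ).1.2 0)) : ℝ) := by
      rw [div_le_div_iff₀ (by exact_mod_cast hpos) (by rw [hHcard]; exact_mod_cast hHpos)]
      rw [one_mul]
      rw [hHcard]
      exact_mod_cast hcardH
    calc (1 / (primeStab Γ o t bar ξ) : ℝ) * r ^ primeLen Γ o t bar ξ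
        ≤ ((s.card : ℝ) / (Nat.card (MulAction.stabilizer Γ
            (γ₀ • (Quot.out ξ).1.2 0)) : ℝ)) * r ^ primeLen Γ o t bar ξ := by
          exact mul_le_mul_of_nonneg_right key (pow_nonneg hr0 _)
      _ = (s.card : ℝ) * ((1 / Nat.card (MulAction.stabilizer Γ
            (γ₀ • (Quot.out ξ).1.2 0)) : ℝ) * r ^ (Quot.out ξ).1.1) := by
          rw [hlen]
          ring
      _ = ∑ p ∈ s, W p.1 := hsum_eq.symm
      _ ≤ ∑' p : {p : TT o t bar F1 // π p = ξ}, W p.1 := hsum_le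

end Master

end IharaAux

namespace IharaAux

lemma norm_log_one_sub_le {u : ℂ} {r : ℝ} (hu : ‖u‖ ≤ r) (hr : r < 1)
    {n : ℕ} (hn : 0 < n) :
    ‖Complex.log (1 - u ^ n)‖ ≤ ((1 - r)⁻¹ + 1) * r ^ n := by
  have hr0 : 0 ≤ r := le_trans (norm_nonneg u) hu
  have hz : ‖-u ^ n‖ ≤ r ^ n := by
    rw [norm_neg, norm_pow]
    exact pow_le_pow_left₀ (norm_nonneg u) hu n
  have hrn : r ^ n ≤ r := by
    calc r ^ n ≤ r ^ 1 := pow_le_pow_of_le_one hr0 hr.le hn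
      _ = r := pow_one r
  have hz1 : ‖-u ^ n‖ < 1 := lt_of_le_of_lt (hz.trans hrn) hr
  have hlog := Complex.norm_log_one_add_le hz1
  rw [show (1 : ℂ) + -u ^ n = 1 - u ^ n by ring] at hlog
  refine hlog.trans ?_
  set z := ‖-u ^ n‖ with hzdef
  have hz0 : 0 ≤ z := norm_nonneg _
  have hzr : z ≤ r := hz.trans hrn
  have hinv : (1 - z)⁻¹ ≤ (1 - r)⁻¹ := by
    apply inv_anti₀ (by linarith) (by linarith)
  have hz2 : z ^ 2 ≤ z := by nlinarith
  have hzlt : z < 1 := hz1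
  have hinv0 : (0 : ℝ) ≤ (1 - z)⁻¹ := inv_nonneg.2 (by linarith)
  have hinv0' : (0 : ℝ) ≤ (1 - r)⁻¹ := inv_nonneg.2 (by linarith)
  have h3 : z ^ 2 * (1 - z)⁻¹ ≤ z * (1 - r)⁻¹ :=
    mul_le_mul hz2 hinv hinv0 hz0
  have h4 : (0 : ℝ) ≤ z ^ 2 * (1 - z)⁻¹ := mul_nonneg (sq_nonneg z) hinv0
  have h5 : (0 : ℝ) ≤ (1 - r)⁻¹ + 1 := by linarith
  calc z ^ 2 * (1 - z)⁻¹ / 2 + z ≤ z * (1 - r)⁻¹ + z := by linarith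
    _ = z * ((1 - r)⁻¹ + 1) := by ring
    _ ≤ r ^ n * ((1 - r)⁻¹ + 1) := mul_le_mul_of_nonneg_right hz h5
    _ = ((1 - r)⁻¹ + 1) * r ^ n := by ring

end IharaAux

/-- Theorem 3.2 (i): the defining series of the Ihara zeta function converges absolutely
and uniformly on compact subsets of the disc `{|u| < 1/(d−1)}`, and `Z_{X,Γ}` is
holomorphic and nowhere vanishing there. -/
theorem zeta_holomorphic_nonvanishing
    {V E Γ : Type*} [Countable V] [Countable E]
    [Group Γ] [Countable Γ] [MulAction Γ V] [MulAction Γ E]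
    -- the graph in the sense of Serre, connected, with degrees bounded by d
    (o t : E → V) (bar : E → E)
    (hbar_invol : ∀ e, bar (bar e) = e)
    (hbar_ne : ∀ e, bar e ≠ e)
    (ho_bar : ∀ e, o (bar e) = t e)
    (hconn : ∀ u v : V, Relation.ReflTransGen (fun a b => ∃ e, o e = a ∧ t e = b) u v)
    (d : ℕ) (hfib : ∀ v, {e | o e = v}.Finite)
    (hdeg : ∀ v, Nat.card {e // o e = v} ≤ d)
    -- Γ acts by automorphisms of the graph
    (ho_smul : ∀ (γ : Γ) (e : E), o (γ • e) = γ • o e)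
    (ht_smul : ∀ (γ : Γ) (e : E), t (γ • e) = γ • t e)
    (hbar_smul : ∀ (γ : Γ) (e : E), bar (γ • e) = γ • bar e)
    -- without inversions
    (hnoinv : ∀ (γ : Γ) (e : E), γ • e ≠ bar e)
    -- discretely (finite vertex stabilizers)
    (hstab : ∀ v : V, Finite (MulAction.stabilizer Γ v))
    -- bounded covolume, w.r.t. a set 𝓕₁ of representatives of the Γ-orbits of edges
    (F1 : Set E) (hF1 : ∀ e : E, ∃! f, f ∈ F1 ∧ ∃ γ : Γ, γ • e = f)
    (hcovol : Summable fun e : F1 => (1 : ℝ) / Nat.card (MulAction.stabilizer Γ (e : E)))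
    (hd2 : 2 ≤ d) :
    (∀ u : ℂ, ‖u‖ < 1 / ((d : ℝ) - 1) →
      Summable (fun ξ : PrimeCycleQuot Γ o t bar =>
        ‖(1 / (primeStab Γ o t bar ξ) : ℂ) *
          Complex.log (1 - u ^ (primeLen Γ o t bar ξ))‖)) ∧
    (∀ K : Set ℂ, IsCompact K → K ⊆ {u : ℂ | ‖u‖ < 1 / ((d : ℝ) - 1)} →
      TendstoUniformlyOn
        (fun (s : Finset (PrimeCycleQuot Γ o t bar)) u =>
          ∑ ξ ∈ s, (1 / (primeStab Γ o t bar ξ) : ℂ) *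
            Complex.log (1 - u ^ (primeLen Γ o t bar ξ)))
        (fun u => ∑' ξ : PrimeCycleQuot Γ o t bar,
          (1 / (primeStab Γ o t bar ξ) : ℂ) *
            Complex.log (1 - u ^ (primeLen Γ o t bar ξ)))
        Filter.atTop K) ∧
    DifferentiableOn ℂ (ZetaIhara Γ o t bar) {u : ℂ | ‖u‖ < 1 / ((d : ℝ) - 1)} ∧
    (∀ u : ℂ, ‖u‖ < 1 / ((d : ℝ) - 1) → ZetaIhara Γ o t bar u ≠ 0) := by
  classical
  have hd1 : (1 : ℝ) ≤ (d : ℝ) - 1 := by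
    have : (2 : ℝ) ≤ (d : ℝ) := by exact_mod_cast hd2
    linarith
  have hdpos : (0 : ℝ) < (d : ℝ) - 1 := by linarith
  have hdcast : ((d - 1 : ℕ) : ℝ) = (d : ℝ) - 1 := by
    rw [Nat.cast_sub (by omega)]
    norm_num
  have hD1 : 1 / ((d : ℝ) - 1) ≤ 1 := by
    rw [div_le_one hdpos]
    exact hd1
  have hlenpos : ∀ ξ : PrimeCycleQuot Γ o t bar, 0 < primeLen Γ o t bar ξ :=
    fun ξ => (Quot.out ξ).2.1
  -- the master summability for each admissible radius
  have hmaster : ∀ r : ℝ, 0 ≤ r → r < 1 / ((d : ℝ) - 1) →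
      Summable (fun ξ : PrimeCycleQuot Γ o t bar =>
        (1 / (primeStab Γ o t bar ξ) : ℝ) * r ^ primeLen Γ o t bar ξ) := by
    intro r hr0 hrD
    refine IharaAux.master o t bar hfib ho_bar d hdeg ho_smul ht_smul hbar_smul
      hstab F1 hF1 hcovol r hr0 ?_
    rw [hdcast]
    rw [lt_div_iff₀ hdpos] at hrD
    linarith
  -- the termwise bound
  have hbound : ∀ (r : ℝ), r < 1 → ∀ (x : ℂ), ‖x‖ ≤ r →
      ∀ ξ : PrimeCycleQuot Γ o t bar,
      ‖(1 / (primeStab Γ o t bar ξ) : ℂ) *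
          Complex.log (1 - x ^ (primeLen Γ o t bar ξ))‖ ≤
        ((1 - r)⁻¹ + 1) * ((1 / (primeStab Γ o t bar ξ) : ℝ)
          * r ^ primeLen Γ o t bar ξ) := by
    intro r hr1 x hx ξ
    have hlog := IharaAux.norm_log_one_sub_le hx hr1 (hlenpos ξ)
    rw [norm_mul, norm_div, norm_one, Complex.norm_natCast]
    calc 1 / (primeStab Γ o t bar ξ : ℝ) * ‖Complex.log (1 - x ^ primeLen Γ o t bar ξ)‖
        ≤ 1 / (primeStab Γ o t bar ξ : ℝ) * (((1 - r)⁻¹ + 1) * r ^ primeLen Γ o t bar ξ) := by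
          exact mul_le_mul_of_nonneg_left hlog (by positivity)
      _ = ((1 - r)⁻¹ + 1) * ((1 / (primeStab Γ o t bar ξ) : ℝ)
            * r ^ primeLen Γ o t bar ξ) := by ring
  -- Part 1
  have part1 : ∀ u : ℂ, ‖u‖ < 1 / ((d : ℝ) - 1) →
      Summable (fun ξ : PrimeCycleQuot Γ o t bar =>
        ‖(1 / (primeStab Γ o t bar ξ) : ℂ) *
          Complex.log (1 - u ^ (primeLen Γ o t bar ξ))‖) := by
    intro u hu
    have hr1 : ‖u‖ < 1 := lt_of_lt_of_le hu hD1
    refine Summable.of_nonneg_of_le (fun ξ => norm_nonneg _)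
      (hbound ‖u‖ hr1 u le_rfl) ?_
    exact (hmaster ‖u‖ (norm_nonneg u) hu).mul_left _
  -- Part 2
  have part2 : ∀ K : Set ℂ, IsCompact K → K ⊆ {u : ℂ | ‖u‖ < 1 / ((d : ℝ) - 1)} →
      TendstoUniformlyOn
        (fun (s : Finset (PrimeCycleQuot Γ o t bar)) u =>
          ∑ ξ ∈ s, (1 / (primeStab Γ o t bar ξ) : ℂ) *
            Complex.log (1 - u ^ (primeLen Γ o t bar ξ)))
        (fun u => ∑' ξ : PrimeCycleQuot Γ o t bar,
          (1 / (primeStab Γ o t bar ξ) : ℂ) *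
            Complex.log (1 - u ^ (primeLen Γ o t bar ξ)))
        Filter.atTop K := by
    intro K hK hKsub
    rcases K.eq_empty_or_nonempty with rfl | hne
    · exact tendstoUniformlyOn_empty
    · obtain ⟨u₀, hu₀K, hmax⟩ := hK.exists_isMaxOn hne continuous_norm.continuousOn
      have hrD : ‖u₀‖ < 1 / ((d : ℝ) - 1) := hKsub hu₀K
      have hr1 : ‖u₀‖ < 1 := lt_of_lt_of_le hrD hD1
      refine tendstoUniformlyOn_tsum
        ((hmaster ‖u₀‖ (norm_nonneg u₀) hrD).mul_left ((1 - ‖u₀‖)⁻¹ + 1)) ?_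
      intro ξ x hx
      exact hbound ‖u₀‖ hr1 x (hmax hx) ξ
  -- Part 3
  have hopen : IsOpen {u : ℂ | ‖u‖ < 1 / ((d : ℝ) - 1)} :=
    isOpen_Iio.preimage continuous_norm
  have hdiffsum : ∀ s : Finset (PrimeCycleQuot Γ o t bar),
      DifferentiableOn ℂ
        (fun u => ∑ ξ ∈ s, (1 / (primeStab Γ o t bar ξ) : ℂ) *
          Complex.log (1 - u ^ (primeLen Γ o t bar ξ)))
        {u : ℂ | ‖u‖ < 1 / ((d : ℝ) - 1)} := by
    intro s
    refine DifferentiableOn.fun_sum ?_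
    intro ξ _
    refine DifferentiableOn.const_mul ?_ _
    refine DifferentiableOn.clog ?_ ?_
    · exact (differentiableOn_const 1).sub (differentiable_pow _).differentiableOn
    · intro x hx
      have hx1 : ‖x‖ < 1 := lt_of_lt_of_le hx hD1
      have hxn : ‖x ^ primeLen Γ o t bar ξ‖ < 1 := by
        rw [norm_pow]
        calc ‖x‖ ^ primeLen Γ o t bar ξ ≤ ‖x‖ ^ 1 :=
              pow_le_pow_of_le_one (norm_nonneg x) hx1.le (hlenpos ξ)
          _ = ‖x‖ := pow_one _
          _ < 1 := hx1
      refine Complex.mem_slitPlane_iff.mpr (Or.inl ?_)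
      have hre : |(x ^ primeLen Γ o t bar ξ).re| ≤ ‖x ^ primeLen Γ o t bar ξ‖ :=
        Complex.abs_re_le_norm _
      rw [Complex.sub_re, Complex.one_re]
      have := abs_le.mp hre
      linarith [this.2]
  have hlocun : TendstoLocallyUniformlyOn
      (fun (s : Finset (PrimeCycleQuot Γ o t bar)) u =>
        ∑ ξ ∈ s, (1 / (primeStab Γ o t bar ξ) : ℂ) *
          Complex.log (1 - u ^ (primeLen Γ o t bar ξ)))
      (fun u => ∑' ξ : PrimeCycleQuot Γ o t bar,
        (1 / (primeStab Γ o t bar ξ) : ℂ) *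
          Complex.log (1 - u ^ (primeLen Γ o t bar ξ)))
      Filter.atTop {u : ℂ | ‖u‖ < 1 / ((d : ℝ) - 1)} :=
    (tendstoLocallyUniformlyOn_iff_forall_isCompact hopen).mpr
      (fun K hKsub hK => part2 K hK hKsub)
  have hg : DifferentiableOn ℂ
      (fun u => ∑' ξ : PrimeCycleQuot Γ o t bar,
        (1 / (primeStab Γ o t bar ξ) : ℂ) *
          Complex.log (1 - u ^ (primeLen Γ o t bar ξ)))
      {u : ℂ | ‖u‖ < 1 / ((d : ℝ) - 1)} :=
    hlocun.differentiableOn (Filter.Eventually.of_forall hdiffsum) hopen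
  refine ⟨part1, part2, ?_, ?_⟩
  · exact hg.neg.cexp
  · intro u hu
    exact Complex.exp_ne_zero _
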